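/- Every mesh pattern has a unique decomposition as a direct sum of indecomposable mesh patterns. -/

import Mathlib

/-!
# The poset of mesh patterns

A mesh pattern is a permutation of `{1, ..., len}` together with a set of shaded
boxes in the `(len+1) × (len+1)` grid (boxes are indexed by their south-west corner,
so boxes have coordinates in `{0, ..., len} × {0, ..., len}`).

We normalise the permutation as a function `ℕ → ℕ` (using 1-based indexing) which is
`0` outside of `[1, len]`; this makes equality of mesh patterns coincide with equality
of the underlying data.
-/

structure MeshPattern where
  len : ℕ
  perm : ℕ → ℕ
  sh : Finset (ℕ × ℕ)
  perm_mem : ∀ i, 1 ≤ i → i ≤ len → 1 ≤ perm i ∧ perm i ≤ len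
  perm_zero : ∀ i, i = 0 ∨ len < i → perm i = 0
  perm_inj : ∀ i j, 1 ≤ i → i ≤ len → 1 ≤ j → j ≤ len → perm i = perm j → i = j
  perm_surj : ∀ v, 1 ≤ v → v ≤ len → ∃ i, 1 ≤ i ∧ i ≤ len ∧ perm i = v
  sh_mem : ∀ q ∈ sh, q.1 ≤ len ∧ q.2 ≤ len

namespace MeshPattern

/-- The (1-based) position of the value `v` in the underlying permutation of `m`. -/
noncomputable def pos (m : MeshPattern) (v : ℕ) : ℕ := Function.invFun m.perm v

/-- The dimension of a mesh pattern: length of the permutation plus number of shaded boxes. -/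
def dim (m : MeshPattern) : ℕ := m.len + m.sh.card

/-- Given (the position map of an occurrence) `η` of `m` in `p`, the extended column
boundary map: pattern column boundary `i` (for `0 ≤ i ≤ m.len + 1`) is sent to the
corresponding column boundary in `p`.  Boxes of `p` with first coordinate `a` satisfying
`colExt m p η i ≤ a < colExt m p η (i+1)` are exactly the boxes lying horizontally
within the region corresponding to pattern boxes with first coordinate `i`. -/
def colExt (m p : MeshPattern) (η : ℕ → ℕ) (i : ℕ) : ℕ :=
  if i = 0 then 0 else if i ≤ m.len then η i else p.len + 1

/-- The analogous extended row (value) boundary map. -/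
noncomputable def valExt (m p : MeshPattern) (η : ℕ → ℕ) (j : ℕ) : ℕ :=
  if j = 0 then 0 else if j ≤ m.len then p.perm (η (m.pos j)) else p.len + 1

/-- The box `(a, b)` of `p` lies in the region `R_η(i, j)` of the box `(i, j)` of `m`. -/
def inRegion (m p : MeshPattern) (η : ℕ → ℕ) (i j a b : ℕ) : Prop :=
  colExt m p η i ≤ a ∧ a < colExt m p η (i + 1) ∧
    valExt m p η j ≤ b ∧ b < valExt m p η (j + 1)

/-- The point of `p` at position `y` lies in the open interior of the region `R_η(i, j)`. -/
def interiorPt (m p : MeshPattern) (η : ℕ → ℕ) (i j y : ℕ) : Prop :=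
  colExt m p η i < y ∧ y < colExt m p η (i + 1) ∧
    valExt m p η j < p.perm y ∧ p.perm y < valExt m p η (j + 1)

/-- `η` is an occurrence of the mesh pattern `m` in the mesh pattern `p`:
a (normalised) strictly increasing choice of positions realising the underlying
classical pattern, such that for every shaded box of `m` the corresponding region of `p`
contains no point of `p` in its interior and consists entirely of shaded boxes of `p`. -/
structure IsOcc (m p : MeshPattern) (η : ℕ → ℕ) : Prop where
  zero : ∀ i, i = 0 ∨ m.len < i → η i = 0
  mem : ∀ i, 1 ≤ i → i ≤ m.len → 1 ≤ η i ∧ η i ≤ p.len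
  mono : ∀ i j, 1 ≤ i → i < j → j ≤ m.len → η i < η j
  pattern : ∀ i j, 1 ≤ i → i ≤ m.len → 1 ≤ j → j ≤ m.len →
    (m.perm i < m.perm j ↔ p.perm (η i) < p.perm (η j))
  no_point : ∀ q ∈ m.sh, ∀ y, 1 ≤ y → y ≤ p.len → ¬ interiorPt m p η q.1 q.2 y
  shaded : ∀ q ∈ m.sh, ∀ a b, inRegion m p η q.1 q.2 a b → (a, b) ∈ p.sh

/-- The mesh pattern poset: `m ≤ p` iff there is an occurrence of `m` in `p`. -/
instance : LE MeshPattern := ⟨fun m p => ∃ η, IsOcc m p η⟩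

instance : LT MeshPattern := ⟨fun m p => m ≤ p ∧ m ≠ p⟩

/-- `b` covers `a` in the mesh pattern poset. -/
def CovByM (a b : MeshPattern) : Prop := a < b ∧ ¬ ∃ z, a < z ∧ z < b

open Classical in
/-- The Möbius function of a (locally finite) partial order `r`, computed with a fuel
parameter: `muFuel r n a b` is the Möbius function `μ(a, b)` provided `n` is at least the
length of the longest chain from `a` to `b` (with the convention `μ(a, b) = 0` if
`¬ r a b`). -/
noncomputable def muFuel {α : Type*} (r : α → α → Prop) : ℕ → α → α → ℤ
  | 0, a, b => if a = b then 1 else 0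
  | n + 1, a, b =>
      if a = b then 1
      else if r a b then - ∑ᶠ c ∈ {c | r a c ∧ r c b ∧ c ≠ b}, muFuel r n a c
      else 0

/-- The Möbius function of the mesh pattern poset.  Since every chain from `m` to `p` has
length at most `dim p`, the fuel `dim p + 1` is sufficient, so this is the genuine Möbius
function: `mu m m = 1`, `mu m p = -∑_{m ≤ c < p} mu m c` for `m < p`, and `mu m p = 0`
when `m ≰ p`. -/
noncomputable def mu (m p : MeshPattern) : ℤ := muFuel (· ≤ ·) (p.dim + 1) m p

/-- The classical permutation poset `𝓟`, realised as the subposet of unshaded mesh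
patterns (for unshaded patterns, mesh occurrence is exactly classical pattern
containment).  Its Möbius function. -/
noncomputable def muP (σ π : {m : MeshPattern // m.sh = ∅}) : ℤ :=
  muFuel (· ≤ ·) (π.1.len + 1) σ π

/-- The mesh pattern with underlying identity permutation of length `n`
and shaded boxes `s`. -/
def ofId (n : ℕ) (s : Finset (ℕ × ℕ)) (hs : ∀ q ∈ s, q.1 ≤ n ∧ q.2 ≤ n) : MeshPattern where
  len := n
  perm := fun i => if 1 ≤ i ∧ i ≤ n then i else 0
  sh := s
  perm_mem := by intro i h1 h2; (try dsimp only); rw [if_pos ⟨h1, h2⟩]; omega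
  perm_zero := by intro i h; (try dsimp only); rw [if_neg]; omega
  perm_inj := by intro i j h1 h2 h3 h4 h; (try dsimp only at h); rw [if_pos ⟨h1, h2⟩, if_pos ⟨h3, h4⟩] at h; omega
  perm_surj := by
    intro v h1 h2; exact ⟨v, h1, h2, by (try dsimp only); rw [if_pos ⟨h1, h2⟩]⟩
  sh_mem := hs

/-- The mesh pattern with underlying decreasing permutation of length `n`
and shaded boxes `s`. -/
def ofRev (n : ℕ) (s : Finset (ℕ × ℕ)) (hs : ∀ q ∈ s, q.1 ≤ n ∧ q.2 ≤ n) : MeshPattern where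
  len := n
  perm := fun i => if 1 ≤ i ∧ i ≤ n then n + 1 - i else 0
  sh := s
  perm_mem := by intro i h1 h2; (try dsimp only); rw [if_pos ⟨h1, h2⟩]; omega
  perm_zero := by intro i h; (try dsimp only); rw [if_neg]; omega
  perm_inj := by intro i j h1 h2 h3 h4 h; (try dsimp only at h); rw [if_pos ⟨h1, h2⟩, if_pos ⟨h3, h4⟩] at h; omega
  perm_surj := by
    intro v h1 h2
    exact ⟨n + 1 - v, by omega, by omega, by (try dsimp only); rw [if_pos ⟨by omega, by omega⟩]; omega⟩
  sh_mem := hs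

/-- The unshaded singleton mesh pattern `1^∅`. -/
def one0 : MeshPattern := ofId 1 ∅ (by simp)

/-- The empty mesh pattern `ε^∅`. -/
def eps0 : MeshPattern := ofId 0 ∅ (by simp)

/-- The empty mesh pattern `ε^{(0,0)}` with its single box shaded. -/
def eps00 : MeshPattern := ofId 0 {(0, 0)} (by decide)

/-- The singleton mesh patterns `1^{(a,b)}` for `a b ∈ {0,1}`. -/
def one00 : MeshPattern := ofId 1 {(0, 0)} (by decide)
def one10 : MeshPattern := ofId 1 {(1, 0)} (by decide)
def one01 : MeshPattern := ofId 1 {(0, 1)} (by decide)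
def one11 : MeshPattern := ofId 1 {(1, 1)} (by decide)

/-- The mesh pattern `21^{(0,0),(1,0)}`. -/
def pat21 : MeshPattern := ofRev 2 {(0, 0), (1, 0)} (by decide)

/-- Replace the shading of `p` by a subset `A ⊆ sh p` (same underlying permutation):
this is the mesh pattern `(cl p)^A`. -/
def reshade (p : MeshPattern) (A : Finset (ℕ × ℕ)) (hA : A ⊆ p.sh) : MeshPattern :=
  { p with sh := A, sh_mem := fun q hq => p.sh_mem q (hA hq) }

/-- The occurrence `η` of `s` in `p` uses the shaded box `(a, b) ∈ sh p`. -/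
def UsesBox (s p : MeshPattern) (η : ℕ → ℕ) (a b : ℕ) : Prop :=
  (a, b) ∈ p.sh ∧ ∃ i j, (i, j) ∈ s.sh ∧ inRegion s p η i j a b

/-- The position map of the occurrence of `p − x` in `p` avoiding the point at
position `x`. -/
def etaDel (p : MeshPattern) (x : ℕ) : ℕ → ℕ := fun i =>
  if 1 ≤ i ∧ i ≤ p.len - 1 then (if i < x then i else i + 1) else 0

/-- The underlying permutation of the pattern obtained from `p` by deleting the point at
position `x`. -/
def delPerm (p : MeshPattern) (x : ℕ) : ℕ → ℕ := fun i =>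
  if 1 ≤ i ∧ i ≤ p.len - 1 then
    (if p.perm (etaDel p x i) < p.perm x then p.perm (etaDel p x i)
     else p.perm (etaDel p x i) - 1)
  else 0

/-- `q` is the mesh pattern `p − x` obtained from `p` by deleting the point at position
`x` (where `1 ≤ x ≤ len p`): the underlying permutation is obtained by deleting that
letter, and a box of `q` is shaded exactly when the corresponding region of `p` (under
the occurrence `etaDel p x`) is entirely shaded and contains no point of `p` in its
interior.  In particular `etaDel p x` is an occurrence of `q` in `p`. -/
def IsDeletion (p : MeshPattern) (x : ℕ) (q : MeshPattern) : Prop :=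
  1 ≤ x ∧ x ≤ p.len ∧ q.len + 1 = p.len ∧ q.perm = delPerm p x ∧
    ∀ i j : ℕ, ((i, j) ∈ q.sh ↔ i ≤ q.len ∧ j ≤ q.len ∧
      (∀ a b, inRegion q p (etaDel p x) i j a b → (a, b) ∈ p.sh) ∧
      ∀ y, 1 ≤ y → y ≤ p.len → ¬ interiorPt q p (etaDel p x) i j y)

/-- Deleting the point at position `x` of `p` (with `q = p − x`) merges shadings:
some shaded box of `q` corresponds to more than one shaded box of `p`. -/
def MergesShadings (p : MeshPattern) (x : ℕ) (q : MeshPattern) : Prop :=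
  ∃ i j, (i, j) ∈ q.sh ∧ ∃ a b a' b', (a, b) ≠ (a', b') ∧ (a, b) ∈ p.sh ∧
    (a', b') ∈ p.sh ∧ inRegion q p (etaDel p x) i j a b ∧
    inRegion q p (etaDel p x) i j a' b'

/-- `f 0 ⋖ f 1 ⋖ ⋯ ⋖ f k` is a maximal chain of length `k` from `a` to `b`. -/
def IsMaxChain (a b : MeshPattern) (k : ℕ) (f : ℕ → MeshPattern) : Prop :=
  f 0 = a ∧ f k = b ∧ ∀ i < k, CovByM (f i) (f (i + 1))

/-- Underlying permutation of the direct sum `s ⊕ t`. -/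
def dsumPerm (s t : MeshPattern) : ℕ → ℕ := fun i =>
  if i ≤ s.len then s.perm i
  else if i ≤ s.len + t.len then t.perm (i - s.len) + s.len
  else 0

/-- Shading of the direct sum `s ⊕ t`: the shadings of `s` and of `t` (translated), where
boxes on the shared boundary are extended to the new boundary (north/east for boxes of
`s`, south/west for boxes of `t`). -/
def dsumSh (s t : MeshPattern) : Finset (ℕ × ℕ) :=
  s.sh ∪ t.sh.image (fun q => (q.1 + s.len, q.2 + s.len)) ∪
    (s.sh.filter (fun q => q.2 = s.len)).biUnion
      (fun q => (Finset.range (t.len + 1)).image (fun k => (q.1, s.len + k))) ∪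
    (s.sh.filter (fun q => q.1 = s.len)).biUnion
      (fun q => (Finset.range (t.len + 1)).image (fun k => (s.len + k, q.2))) ∪
    (t.sh.filter (fun q => q.2 = 0)).biUnion
      (fun q => (Finset.range (s.len + 1)).image (fun k => (q.1 + s.len, k))) ∪
    (t.sh.filter (fun q => q.1 = 0)).biUnion
      (fun q => (Finset.range (s.len + 1)).image (fun k => (k, q.2 + s.len)))

/-- `r = s ⊕ t` is the direct sum of the mesh patterns `s` and `t` (defined when the top
right corner box of `s` and the bottom left corner box of `t` are not shaded). -/
def IsDSum (s t r : MeshPattern) : Prop :=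
  (s.len, s.len) ∉ s.sh ∧ (0, 0) ∉ t.sh ∧
    r.len = s.len + t.len ∧ r.perm = dsumPerm s t ∧ r.sh = dsumSh s t

/-- A mesh pattern is indecomposable if it cannot be written as a direct sum `a ⊕ b`
with neither `a` nor `b` equal to it. -/
def Indecomposable (m : MeshPattern) : Prop :=
  ¬ ∃ s t, s ≠ m ∧ t ≠ m ∧ IsDSum s t m

/-- `SumOfList L m`: `m` is the direct sum of the list `L` of mesh patterns
(the empty list summing to the empty pattern `ε^∅`). -/
def SumOfList : List MeshPattern → MeshPattern → Prop
  | [], m => m.len = 0 ∧ m.sh = ∅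
  | [a], m => a = m
  | a :: b :: rest, m => ∃ r, SumOfList (b :: rest) r ∧ IsDSum a r m

/-- Underlying permutation of the skew sum `s ⊖ t`. -/
def sksumPerm (s t : MeshPattern) : ℕ → ℕ := fun i =>
  if i = 0 then 0
  else if i ≤ s.len then s.perm i + t.len
  else if i ≤ s.len + t.len then t.perm (i - s.len)
  else 0

/-- Shading of the skew sum `s ⊖ t` (s placed to the north west of `t`), with boxes on
the shared boundary extended to the new boundary. -/
def sksumSh (s t : MeshPattern) : Finset (ℕ × ℕ) :=
  s.sh.image (fun q => (q.1, q.2 + t.len)) ∪ t.sh.image (fun q => (q.1 + s.len, q.2)) ∪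
    (s.sh.filter (fun q => q.1 = s.len)).biUnion
      (fun q => (Finset.range (t.len + 1)).image (fun k => (s.len + k, q.2 + t.len))) ∪
    (s.sh.filter (fun q => q.2 = 0)).biUnion
      (fun q => (Finset.range (t.len + 1)).image (fun k => (q.1, k))) ∪
    (t.sh.filter (fun q => q.2 = t.len)).biUnion
      (fun q => (Finset.range (s.len + 1)).image (fun k => (q.1 + s.len, t.len + k))) ∪
    (t.sh.filter (fun q => q.1 = 0)).biUnion
      (fun q => (Finset.range (s.len + 1)).image (fun k => (k, q.2)))

/-- `r = s ⊖ t` is the skew sum of the mesh patterns `s` and `t` (defined when the bottom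
right corner box of `s` and the top left corner box of `t` are not shaded). -/
def IsSkewSum (s t r : MeshPattern) : Prop :=
  (s.len, 0) ∉ s.sh ∧ (0, t.len) ∉ t.sh ∧
    r.len = s.len + t.len ∧ r.perm = sksumPerm s t ∧ r.sh = sksumSh s t

/-- A mesh pattern is skew-indecomposable if it cannot be written as a skew sum `a ⊖ b`
with neither `a` nor `b` equal to it. -/
def SkewIndecomposable (m : MeshPattern) : Prop :=
  ¬ ∃ s t, s ≠ m ∧ t ≠ m ∧ IsSkewSum s t m

/-- Connectivity (zig-zag of comparabilities) inside a subset `I` of the mesh pattern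
poset. -/
def ConnIn (I : Set MeshPattern) (a b : MeshPattern) : Prop :=
  Relation.ReflTransGen (fun u v => u ∈ I ∧ v ∈ I ∧ (u ≤ v ∨ v ≤ u)) a b

/-- The interval `[m, p]` is strongly disconnected: its open interior has at least two
connected components each containing more than one element. -/
def StronglyDisconnectedInterval (m p : MeshPattern) : Prop :=
  ∃ a b, (m < a ∧ a < p) ∧ (m < b ∧ b < p) ∧ ¬ ConnIn {c | m < c ∧ c < p} a b ∧
    (∃ a', (m < a' ∧ a' < p) ∧ a' ≠ a ∧ ConnIn {c | m < c ∧ c < p} a a') ∧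
    (∃ b', (m < b' ∧ b' < p) ∧ b' ≠ b ∧ ConnIn {c | m < c ∧ c < p} b b')

/-- The occurrence of `m` in `m ⊕ m` (or `m ⊖ m`) as the first `|m|` points. -/
def eta1 (m : MeshPattern) : ℕ → ℕ := fun i => if 1 ≤ i ∧ i ≤ m.len then i else 0

/-- The occurrence of `m` in `m ⊕ m` (or `m ⊖ m`) as the last `|m|` points. -/
def eta2 (m : MeshPattern) : ℕ → ℕ := fun i => if 1 ≤ i ∧ i ≤ m.len then i + m.len else 0

/-- `i` (with `2 ≤ i ≤ len`) is the position of an adjacency tail: the letter at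
position `i` differs by one from the letter at position `i - 1`. -/
def IsAdjTail (m : MeshPattern) (i : ℕ) : Prop :=
  2 ≤ i ∧ i ≤ m.len ∧ (m.perm i = m.perm (i - 1) + 1 ∨ m.perm (i - 1) = m.perm i + 1)

open Classical in
/-- `adj(cl m)`: the number of adjacency tails of the underlying permutation of `m`. -/
noncomputable def adjCount (m : MeshPattern) : ℕ :=
  ((Finset.range (m.len + 1)).filter (fun i => IsAdjTail m i)).card

/-- The total number of mesh patterns of length `n`. -/
def Tcount (n : ℕ) : ℕ := n.factorial * 2 ^ ((n + 1) ^ 2)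

end MeshPattern

/-- Binary words, partially ordered by (not necessarily contiguous) subword containment:
the poset `𝓦`. -/
structure Word where
  toList : List Bool

instance : LE Word := ⟨fun u w => u.toList.Sublist w.toList⟩

/-- The binary word associated to a mesh pattern `m` in the class `Γ`: it has length
`|m| - 1`, and for each letter `i` with `2 ≤ i ≤ |m|` the corresponding entry is
`false` (i.e. `0`) if the letter `i` appears before the letter `1` in `cl m`,
and `true` (i.e. `1`) otherwise. -/
noncomputable def MeshPattern.wordOf (m : MeshPattern) : List Bool :=
  (List.range (m.len - 1)).map (fun k => if m.pos (k + 2) < m.pos 1 then false else true)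

namespace MeshPattern
theorem ext' {m p : MeshPattern} (h1 : m.len = p.len) (h2 : m.perm = p.perm)
    (h3 : m.sh = p.sh) : m = p := by
  cases m; cases p; simp_all

/-- `m` splits at column `j`: the permutation maps `[1,j]` into `[1,j]` and the
shading satisfies the direct-sum closure conditions. -/
def SplitAt (m : MeshPattern) (j : ℕ) : Prop :=
  j ≤ m.len ∧
  (∀ i, 1 ≤ i → i ≤ j → m.perm i ≤ j) ∧
  (j, j) ∉ m.sh ∧
  (∀ a b, a < j → j < b → b ≤ m.len → ((a, b) ∈ m.sh ↔ (a, j) ∈ m.sh ∨ (j, b) ∈ m.sh)) ∧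
  (∀ a b, j < a → a ≤ m.len → b < j → ((a, b) ∈ m.sh ↔ (a, j) ∈ m.sh ∨ (j, b) ∈ m.sh))

theorem SplitAt.left_surj {m : MeshPattern} {j : ℕ} (h : SplitAt m j)
    (v : ℕ) (h1 : 1 ≤ v) (h2 : v ≤ j) : ∃ i, 1 ≤ i ∧ i ≤ j ∧ m.perm i = v := by
  have key := Finset.surj_on_of_inj_on_of_card_le (s := Finset.Icc 1 j) (t := Finset.Icc 1 j)
    (fun a _ => m.perm a)
    (fun a ha => by
      simp only [Finset.mem_Icc] at ha ⊢
      exact ⟨(m.perm_mem a ha.1 (le_trans ha.2 h.1)).1, h.2.1 a ha.1 ha.2⟩)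
    (fun a₁ a₂ ha₁ ha₂ hh => by
      simp only [Finset.mem_Icc] at ha₁ ha₂
      exact m.perm_inj a₁ a₂ ha₁.1 (le_trans ha₁.2 h.1) ha₂.1 (le_trans ha₂.2 h.1) hh)
    le_rfl
  obtain ⟨i, hi, hiv⟩ := key v (Finset.mem_Icc.mpr ⟨h1, h2⟩)
  simp only [Finset.mem_Icc] at hi
  exact ⟨i, hi.1, hi.2, hiv.symm⟩

theorem SplitAt.perm_gt {m : MeshPattern} {j : ℕ} (h : SplitAt m j)
    (i : ℕ) (h1 : j < i) (h2 : i ≤ m.len) : j < m.perm i := by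
  by_contra hc
  push_neg at hc
  have h1' : 1 ≤ i := by omega
  have hmem := m.perm_mem i h1' h2
  obtain ⟨i', hi1, hi2, hi3⟩ := h.left_surj (m.perm i) hmem.1 hc
  have := m.perm_inj i' i hi1 (le_trans hi2 h.1) h1' h2 hi3
  omega

/-- The left part of a split of `m` at `j`. -/
def leftPat (m : MeshPattern) (j : ℕ) (h : SplitAt m j) : MeshPattern where
  len := j
  perm := fun i => if 1 ≤ i ∧ i ≤ j then m.perm i else 0
  sh := m.sh.filter (fun q => q.1 ≤ j ∧ q.2 ≤ j)
  perm_mem := by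
    intro i h1 h2
    rw [if_pos ⟨h1, h2⟩]
    exact ⟨(m.perm_mem i h1 (le_trans h2 h.1)).1, h.2.1 i h1 h2⟩
  perm_zero := by intro i hi; rw [if_neg]; omega
  perm_inj := by
    intro i j' h1 h2 h3 h4 hh
    rw [if_pos ⟨h1, h2⟩, if_pos ⟨h3, h4⟩] at hh
    exact m.perm_inj i j' h1 (le_trans h2 h.1) h3 (le_trans h4 h.1) hh
  perm_surj := by
    intro v h1 h2
    obtain ⟨i, hi1, hi2, hi3⟩ := h.left_surj v h1 h2
    exact ⟨i, hi1, hi2, by rw [if_pos ⟨hi1, hi2⟩]; exact hi3⟩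
  sh_mem := by intro q hq; simp only [Finset.mem_filter] at hq; exact hq.2

/-- The right part of a split of `m` at `j`. -/
def rightPat (m : MeshPattern) (j : ℕ) (h : SplitAt m j) : MeshPattern where
  len := m.len - j
  perm := fun i => if 1 ≤ i ∧ i ≤ m.len - j then m.perm (i + j) - j else 0
  sh := (m.sh.filter (fun q => j ≤ q.1 ∧ j ≤ q.2)).image (fun q => (q.1 - j, q.2 - j))
  perm_mem := by
    intro i h1 h2
    rw [if_pos ⟨h1, h2⟩]
    have hgt := h.perm_gt (i + j) (by omega) (by omega)
    have := (m.perm_mem (i + j) (by omega) (by omega)).2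
    omega
  perm_zero := by intro i hi; rw [if_neg]; omega
  perm_inj := by
    intro i j' h1 h2 h3 h4 hh
    rw [if_pos ⟨h1, h2⟩, if_pos ⟨h3, h4⟩] at hh
    have g1 := h.perm_gt (i + j) (by omega) (by omega)
    have g2 := h.perm_gt (j' + j) (by omega) (by omega)
    have := m.perm_inj (i + j) (j' + j) (by omega) (by omega) (by omega) (by omega) (by omega)
    omega
  perm_surj := by
    intro v h1 h2
    obtain ⟨i, hi1, hi2, hi3⟩ := m.perm_surj (v + j) (by omega) (by omega)
    have hij : j < i := by
      by_contra hc
      push_neg at hc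
      have := h.2.1 i hi1 hc
      omega
    refine ⟨i - j, by omega, by omega, ?_⟩
    rw [if_pos ⟨by omega, by omega⟩]
    have : i - j + j = i := by omega
    rw [this, hi3]
    omega
  sh_mem := by
    intro q hq
    simp only [Finset.mem_image, Finset.mem_filter] at hq
    obtain ⟨c, ⟨hc, hc1, hc2⟩, rfl⟩ := hq
    have := m.sh_mem c hc
    exact ⟨by omega, by omega⟩

theorem mem_leftPat_sh {m : MeshPattern} {j : ℕ} (h : SplitAt m j) (a b : ℕ) :
    (a, b) ∈ (leftPat m j h).sh ↔ (a, b) ∈ m.sh ∧ a ≤ j ∧ b ≤ j := by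
  simp [leftPat]

theorem mem_rightPat_sh {m : MeshPattern} {j : ℕ} (h : SplitAt m j) (a b : ℕ) :
    (a, b) ∈ (rightPat m j h).sh ↔ (a + j, b + j) ∈ m.sh := by
  simp only [rightPat, Finset.mem_image, Finset.mem_filter, Prod.mk.injEq, Prod.exists]
  constructor
  · rintro ⟨x, y, ⟨hm, hx, hy⟩, rfl, rfl⟩
    have : x - j + j = x := by omega
    rw [this]
    have : y - j + j = y := by omega
    rw [this]
    exact hm
  · intro hm
    exact ⟨a + j, b + j, ⟨hm, by omega, by omega⟩, by omega, by omega⟩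
theorem mem_dsumSh (s t : MeshPattern) (a b : ℕ) :
    (a, b) ∈ dsumSh s t ↔
      (a, b) ∈ s.sh ∨
      (∃ x y, (x, y) ∈ t.sh ∧ a = x + s.len ∧ b = y + s.len) ∨
      ((a, s.len) ∈ s.sh ∧ s.len ≤ b ∧ b ≤ s.len + t.len) ∨
      ((s.len, b) ∈ s.sh ∧ s.len ≤ a ∧ a ≤ s.len + t.len) ∨
      (∃ x, (x, 0) ∈ t.sh ∧ a = x + s.len ∧ b ≤ s.len) ∨
      (∃ y, (0, y) ∈ t.sh ∧ b = y + s.len ∧ a ≤ s.len) := by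
  simp only [dsumSh, Finset.mem_union, Finset.mem_image, Finset.mem_biUnion,
    Finset.mem_filter, Finset.mem_range, Prod.mk.injEq, Prod.exists]
  constructor
  · rintro (((((h | ⟨x, y, h, rfl, rfl⟩) | ⟨x, y, ⟨h, hy⟩, k, hk, rfl, rfl⟩) |
      ⟨x, y, ⟨h, hx⟩, k, hk, rfl, rfl⟩) | ⟨x, y, ⟨h, hy⟩, k, hk, rfl, rfl⟩) |
      ⟨x, y, ⟨h, hx⟩, k, hk, rfl, rfl⟩)
    · exact Or.inl h
    · exact Or.inr (Or.inl ⟨x, y, h, rfl, rfl⟩)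
    · subst hy; exact Or.inr (Or.inr (Or.inl ⟨h, by omega, by omega⟩))
    · subst hx; exact Or.inr (Or.inr (Or.inr (Or.inl ⟨h, by omega, by omega⟩)))
    · subst hy; exact Or.inr (Or.inr (Or.inr (Or.inr (Or.inl ⟨x, h, rfl, by omega⟩))))
    · subst hx; exact Or.inr (Or.inr (Or.inr (Or.inr (Or.inr ⟨y, h, rfl, by omega⟩))))
  · rintro (h | ⟨x, y, h, rfl, rfl⟩ | ⟨h, hb1, hb2⟩ | ⟨h, ha1, ha2⟩ |
      ⟨x, h, rfl, hb⟩ | ⟨y, h, rfl, ha⟩)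
    · exact Or.inl (Or.inl (Or.inl (Or.inl (Or.inl h))))
    · exact Or.inl (Or.inl (Or.inl (Or.inl (Or.inr ⟨x, y, h, rfl, rfl⟩))))
    · exact Or.inl (Or.inl (Or.inl (Or.inr ⟨a, s.len, ⟨h, rfl⟩, b - s.len, by omega, rfl, by omega⟩)))
    · exact Or.inl (Or.inl (Or.inr ⟨s.len, b, ⟨h, rfl⟩, a - s.len, by omega, by omega, rfl⟩))
    · exact Or.inl (Or.inr ⟨x, 0, ⟨h, rfl⟩, b, by
        have := t.sh_mem (x, 0) h
        omega, rfl, rfl⟩)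
    · exact Or.inr ⟨0, y, ⟨h, rfl⟩, a, by omega, rfl, rfl⟩

theorem isDSum_split {m : MeshPattern} {j : ℕ} (h : SplitAt m j) :
    IsDSum (leftPat m j h) (rightPat m j h) m := by
  have hjle := h.1
  have hP2 := h.2.2.1
  have hP3 := h.2.2.2.1
  have hP4 := h.2.2.2.2
  have hL : (leftPat m j h).len = j := rfl
  have hR : (rightPat m j h).len = m.len - j := rfl
  refine ⟨?_, ?_, ?_, ?_, ?_⟩
  · rw [hL, mem_leftPat_sh]
    tauto
  · rw [mem_rightPat_sh]
    simpa using hP2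
  · rw [hL, hR]; omega
  · funext i
    unfold dsumPerm
    rw [hL, hR]
    rcases Nat.lt_or_ge j i with hij | hij
    · rw [if_neg (by omega)]
      rcases le_or_gt i (j + (m.len - j)) with hile | hile
      · rw [if_pos (by omega)]
        show m.perm i = (if 1 ≤ i - j ∧ i - j ≤ m.len - j then m.perm (i - j + j) - j else 0) + j
        rw [if_pos ⟨by omega, by omega⟩]
        have : i - j + j = i := by omega
        rw [this]
        have := h.perm_gt i hij (by omega)
        omega
      · rw [if_neg (by omega)]
        exact m.perm_zero i (by omega)
    · rw [if_pos hij]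
      show m.perm i = if 1 ≤ i ∧ i ≤ j then m.perm i else 0
      rcases Nat.eq_zero_or_pos i with rfl | hi
      · rw [if_neg (by omega)]
        exact m.perm_zero 0 (by omega)
      · rw [if_pos ⟨hi, hij⟩]
  · ext ⟨a, b⟩
    rw [mem_dsumSh]
    rw [mem_leftPat_sh, mem_leftPat_sh, mem_leftPat_sh, hL, hR]
    have key2 : ∀ x y, ((x, y) ∈ (rightPat m j h).sh ↔ (x + j, y + j) ∈ m.sh) :=
      fun x y => mem_rightPat_sh h x y
    simp only [key2]
    have hlen : j + (m.len - j) = m.len := by omega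
    constructor
    · intro hm
      have hb := m.sh_mem (a, b) hm
      simp only at hb
      rcases Nat.lt_or_ge a j with ha | ha <;> rcases Nat.lt_or_ge b j with hb' | hb'
      · exact Or.inl ⟨hm, by omega, by omega⟩
      · rcases Nat.eq_or_lt_of_le hb' with rfl | hbj
        · exact Or.inl ⟨hm, by omega, le_rfl⟩
        · rcases (hP3 a b ha hbj hb.2).mp hm with h1 | h1
          · exact Or.inr (Or.inr (Or.inl ⟨⟨h1, by omega, le_rfl⟩, by omega, by omega⟩))
          · exact Or.inr (Or.inr (Or.inr (Or.inr (Or.inr ⟨b - j, by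
              simpa [Nat.sub_add_cancel hb'] using h1, by omega, by omega⟩))))
      · rcases Nat.eq_or_lt_of_le ha with rfl | haj
        · exact Or.inl ⟨hm, le_rfl, by omega⟩
        · rcases (hP4 a b haj hb.1 hb').mp hm with h1 | h1
          · exact Or.inr (Or.inr (Or.inr (Or.inr (Or.inl ⟨a - j, by
              simpa [Nat.sub_add_cancel ha] using h1, by omega, by omega⟩))))
          · exact Or.inr (Or.inr (Or.inr (Or.inl ⟨⟨h1, le_rfl, by omega⟩, by omega, by omega⟩)))
      · exact Or.inr (Or.inl ⟨a - j, b - j, by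
          have : a - j + j = a := by omega
          rw [this]
          have : b - j + j = b := by omega
          rw [this]
          exact hm, by omega, by omega⟩)
    · rintro (⟨hm, _, _⟩ | ⟨x, y, hm, rfl, rfl⟩ | ⟨⟨hm, haj, _⟩, hb1, hb2⟩ |
        ⟨⟨hm, _, hbj⟩, ha1, ha2⟩ | ⟨x, hm, rfl, hb1⟩ | ⟨y, hm, rfl, ha1⟩)
      · exact hm
      · exact hm
      · -- (a, j) ∈ m.sh, a ≤ j, j ≤ b
        rcases Nat.eq_or_lt_of_le hb1 with rfl | hbj2
        · exact hm
        · rcases Nat.eq_or_lt_of_le haj with rfl | haj2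
          · exact absurd hm hP2
          · exact (hP3 a b haj2 hbj2 (by omega)).mpr (Or.inl hm)
      · rcases Nat.eq_or_lt_of_le ha1 with rfl | haj2
        · exact hm
        · rcases Nat.eq_or_lt_of_le hbj with rfl | hbj2
          · exact absurd hm hP2
          · exact (hP4 a b haj2 (by omega) hbj2).mpr (Or.inr hm)
      · -- (x + j, j) ∈ m.sh, b ≤ j
        simp only [Nat.zero_add] at hm
        rcases Nat.eq_zero_or_pos x with rfl | hx
        · simp only [Nat.zero_add] at hm; exact absurd hm hP2
        · rcases Nat.eq_or_lt_of_le hb1 with rfl | hbj2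
          · exact hm
          · have hle := m.sh_mem (x + j, j) hm
            exact (hP4 (x + j) b (by omega) (by exact hle.1) hbj2).mpr (Or.inl hm)
      · simp only [Nat.zero_add] at hm
        rcases Nat.eq_zero_or_pos y with rfl | hy
        · simp only [Nat.zero_add] at hm; exact absurd hm hP2
        · rcases Nat.eq_or_lt_of_le ha1 with rfl | haj2
          · exact hm
          · have hle := m.sh_mem (j, y + j) hm
            exact (hP3 a (y + j) haj2 (by omega) (by exact hle.2)).mpr (Or.inr hm)
theorem isDSum_eq {s t m : MeshPattern} (hd : IsDSum s t m) :
    ∃ h : SplitAt m s.len, s = leftPat m s.len h ∧ t = rightPat m s.len h := by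
  obtain ⟨hd1, hd2, hlen, hperm, hsh⟩ := hd
  set j := s.len with hj
  have key : ∀ a b, ((a, b) ∈ m.sh ↔
      (a, b) ∈ s.sh ∨
      (∃ x y, (x, y) ∈ t.sh ∧ a = x + j ∧ b = y + j) ∨
      ((a, j) ∈ s.sh ∧ j ≤ b ∧ b ≤ j + t.len) ∨
      ((j, b) ∈ s.sh ∧ j ≤ a ∧ a ≤ j + t.len) ∨
      (∃ x, (x, 0) ∈ t.sh ∧ a = x + j ∧ b ≤ j) ∨
      (∃ y, (0, y) ∈ t.sh ∧ b = y + j ∧ a ≤ j)) := by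
    intro a b
    rw [hsh]
    exact mem_dsumSh s t a b
  have hS : ∀ a b, a ≤ j → b ≤ j → ((a, b) ∈ m.sh ↔ (a, b) ∈ s.sh) := by
    intro a b ha hb
    rw [key]
    constructor
    · rintro (hm | ⟨x, y, ht, rfl, rfl⟩ | ⟨hm, hb1, _⟩ | ⟨hm, ha1, _⟩ |
        ⟨x, ht, rfl, _⟩ | ⟨y, ht, rfl, _⟩)
      · exact hm
      · have hx : x = 0 := by omega
        have hy : y = 0 := by omega
        subst hx hy
        exact absurd ht hd2
      · have : b = j := by omega
        subst this; exact hm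
      · have : a = j := by omega
        subst this; exact hm
      · have hx : x = 0 := by omega
        subst hx; exact absurd ht hd2
      · have hy : y = 0 := by omega
        subst hy; exact absurd ht hd2
    · exact fun hm => Or.inl hm
  have hT : ∀ a b, ((a + j, b + j) ∈ m.sh ↔ (a, b) ∈ t.sh) := by
    intro a b
    rw [key]
    constructor
    · rintro (hm | ⟨x, y, ht, hx, hy⟩ | ⟨hm, _, _⟩ | ⟨hm, _, _⟩ |
        ⟨x, ht, hx, hb⟩ | ⟨y, ht, hy, ha⟩)
      · have h1 := s.sh_mem _ hm
        simp only at h1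
        have ha : a = 0 := by omega
        have hb : b = 0 := by omega
        subst ha hb
        exact absurd (by simpa using hm) hd1
      · have : x = a := by omega
        have : y = b := by omega
        subst this; have : x = a := by omega
        subst this; exact ht
      · have h1 := s.sh_mem _ hm
        simp only at h1
        have ha : a = 0 := by omega
        subst ha; exact absurd (by simpa using hm) hd1
      · have h1 := s.sh_mem _ hm
        simp only at h1
        have hb : b = 0 := by omega
        subst hb; exact absurd (by simpa using hm) hd1
      · have hb' : b = 0 := by omega
        have hx' : x = a := by omega
        subst hb' hx'
        exact ht
      · have ha' : a = 0 := by omega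
        have hy' : y = b := by omega
        subst ha' hy'
        exact ht
    · intro ht
      exact Or.inr (Or.inl ⟨a, b, ht, rfl, rfl⟩)
  have hsp : SplitAt m j := by
    refine ⟨by omega, ?_, ?_, ?_, ?_⟩
    · intro i h1 h2
      rw [hperm]
      unfold dsumPerm
      rw [if_pos h2]
      exact (s.perm_mem i h1 h2).2
    · rw [hS j j le_rfl le_rfl]
      exact hd1
    · intro a b ha hb hble
      rw [key]
      constructor
      · rintro (hm | ⟨x, y, ht, rfl, rfl⟩ | ⟨hm, _, _⟩ | ⟨hm, ha1, _⟩ |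
          ⟨x, ht, rfl, hb1⟩ | ⟨y, ht, rfl, _⟩)
        · have := s.sh_mem _ hm
          simp only at this
          omega
        · omega
        · exact Or.inl ((hS a j (by omega) le_rfl).mpr hm)
        · omega
        · omega
        · refine Or.inr ?_
          have := (hT 0 y).mpr ht
          simpa using this
      · rintro (hm | hm)
        · have hm' := (hS a j (by omega) le_rfl).mp hm
          exact Or.inr (Or.inr (Or.inl ⟨hm', by omega, by omega⟩))
        · have hm' : (0 + j, (b - j) + j) ∈ m.sh := by
            have : 0 + j = j := by omega
            rw [this]
            have : b - j + j = b := by omega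
            rw [this]
            exact hm
          have := (hT 0 (b - j)).mp hm'
          exact Or.inr (Or.inr (Or.inr (Or.inr (Or.inr ⟨b - j, this, by omega, by omega⟩))))
    · intro a b ha hale hb
      rw [key]
      constructor
      · rintro (hm | ⟨x, y, ht, rfl, rfl⟩ | ⟨hm, hb1, _⟩ | ⟨hm, _, _⟩ |
          ⟨x, ht, rfl, hb1⟩ | ⟨y, ht, rfl, ha1⟩)
        · have := s.sh_mem _ hm
          simp only at this
          omega
        · omega
        · omega
        · exact Or.inr ((hS j b le_rfl (by omega)).mpr hm)
        · refine Or.inl ?_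
          have := (hT x 0).mpr ht
          simpa using this
        · omega
      · rintro (hm | hm)
        · have hm' : ((a - j) + j, 0 + j) ∈ m.sh := by
            have h0 : 0 + j = j := by omega
            rw [h0]
            have : a - j + j = a := by omega
            rw [this]
            exact hm
          have := (hT (a - j) 0).mp hm'
          exact Or.inr (Or.inr (Or.inr (Or.inr (Or.inl ⟨a - j, this, by omega, by omega⟩))))
        · have hm' := (hS j b le_rfl (by omega)).mp hm
          exact Or.inr (Or.inr (Or.inr (Or.inl ⟨hm', by omega, by omega⟩)))
  refine ⟨hsp, ?_, ?_⟩
  · refine ext' rfl ?_ ?_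
    · funext i
      show s.perm i = if 1 ≤ i ∧ i ≤ j then m.perm i else 0
      by_cases hi : 1 ≤ i ∧ i ≤ j
      · rw [if_pos hi, hperm]
        unfold dsumPerm
        rw [if_pos hi.2]
      · rw [if_neg hi]
        exact s.perm_zero i (by omega)
    · ext ⟨a, b⟩
      rw [mem_leftPat_sh]
      constructor
      · intro hm
        have := s.sh_mem _ hm
        simp only at this
        exact ⟨(hS a b this.1 this.2).mpr hm, this.1, this.2⟩
      · rintro ⟨hm, ha, hb⟩
        exact (hS a b ha hb).mp hm
  · refine ext' (by show t.len = m.len - j; omega) ?_ ?_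
    · funext i
      show t.perm i = if 1 ≤ i ∧ i ≤ m.len - j then m.perm (i + j) - j else 0
      by_cases hi : 1 ≤ i ∧ i ≤ m.len - j
      · rw [if_pos hi]
        have : m.perm (i + j) = t.perm i + j := by
          rw [hperm]
          unfold dsumPerm
          rw [if_neg (by omega), if_pos (by omega), show i + j - s.len = i by omega]
        omega
      · rw [if_neg hi]
        exact t.perm_zero i (by omega)
    · ext ⟨a, b⟩
      rw [mem_rightPat_sh]
      exact (hT a b).symm
theorem leftPat_perm {m : MeshPattern} {k : ℕ} (hk : SplitAt m k) (i : ℕ) :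
    (leftPat m k hk).perm i = if 1 ≤ i ∧ i ≤ k then m.perm i else 0 := rfl

theorem mem_leftPat_sh' {m : MeshPattern} {k : ℕ} (hk : SplitAt m k) {a b : ℕ}
    (ha : a ≤ k) (hb : b ≤ k) : ((a, b) ∈ (leftPat m k hk).sh ↔ (a, b) ∈ m.sh) := by
  rw [mem_leftPat_sh]
  tauto

theorem leftPat_full {m : MeshPattern} (h : SplitAt m m.len) : leftPat m m.len h = m := by
  refine ext' rfl ?_ ?_
  · funext i
    rw [leftPat_perm]
    by_cases hi : 1 ≤ i ∧ i ≤ m.len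
    · rw [if_pos hi]
    · rw [if_neg hi]
      exact (m.perm_zero i (by omega)).symm
  · show m.sh.filter _ = m.sh
    refine Finset.filter_true_of_mem ?_
    intro q hq
    exact m.sh_mem q hq

theorem rightPat_zero {m : MeshPattern} (h : SplitAt m 0) : rightPat m 0 h = m := by
  refine ext' (by show m.len - 0 = m.len; omega) ?_ ?_
  · funext i
    show (if 1 ≤ i ∧ i ≤ m.len - 0 then m.perm (i + 0) - 0 else 0) = m.perm i
    by_cases hi : 1 ≤ i ∧ i ≤ m.len - 0
    · rw [if_pos hi]
      simp
    · rw [if_neg hi]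
      exact (m.perm_zero i (by omega)).symm
  · ext ⟨a, b⟩
    rw [mem_rightPat_sh]
    simp

theorem splitAt_of_left {m : MeshPattern} {k j : ℕ} (hk : SplitAt m k)
    (hj : SplitAt (leftPat m k hk) j) : SplitAt m j := by
  have hjk : j ≤ k := hj.1
  rcases eq_or_lt_of_le hjk with rfl | hjk'
  · exact hk
  refine ⟨by have := hk.1; omega, ?_, ?_, ?_, ?_⟩
  · intro i h1 h2
    have := hj.2.1 i h1 h2
    rw [leftPat_perm, if_pos ⟨h1, by omega⟩] at this
    exact this
  · intro hm
    exact hj.2.2.1 ((mem_leftPat_sh' hk (by omega) (by omega)).mpr hm)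
  · intro a b ha hb hble
    by_cases hbk : b ≤ k
    · have := hj.2.2.2.1 a b ha hb hbk
      rw [mem_leftPat_sh' hk (by omega) hbk, mem_leftPat_sh' hk (by omega) (by omega),
        mem_leftPat_sh' hk (by omega) hbk] at this
      exact this
    · have E1 := hk.2.2.2.1 a b (by omega) (by omega) hble
      have E2 := hk.2.2.2.1 j b (by omega) (by omega) hble
      have E3 := hj.2.2.2.1 a k ha hjk' le_rfl
      rw [mem_leftPat_sh' hk (by omega) le_rfl, mem_leftPat_sh' hk (by omega) (by omega),
        mem_leftPat_sh' hk (by omega) le_rfl] at E3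
      tauto
  · intro a b ha hale hb
    by_cases hak : a ≤ k
    · have := hj.2.2.2.2 a b ha hak hb
      rw [mem_leftPat_sh' hk hak (by omega), mem_leftPat_sh' hk hak (by omega),
        mem_leftPat_sh' hk (by omega) (by omega)] at this
      exact this
    · have E1 := hk.2.2.2.2 a b (by omega) hale (by omega)
      have E2 := hk.2.2.2.2 a j (by omega) hale (by omega)
      have E3 := hj.2.2.2.2 k b hjk' le_rfl hb
      rw [mem_leftPat_sh' hk le_rfl (by omega), mem_leftPat_sh' hk le_rfl (by omega),
        mem_leftPat_sh' hk (by omega) (by omega)] at E3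
      tauto

theorem splitAt_left_of_le {m : MeshPattern} {k j : ℕ} (hk : SplitAt m k)
    (hj : SplitAt m j) (hjk : j ≤ k) : SplitAt (leftPat m k hk) j := by
  refine ⟨hjk, ?_, ?_, ?_, ?_⟩
  · intro i h1 h2
    rw [leftPat_perm, if_pos ⟨h1, by omega⟩]
    exact hj.2.1 i h1 h2
  · intro hm
    exact hj.2.2.1 ((mem_leftPat_sh' hk (by omega) (by omega)).mp hm)
  · intro a b ha hb hble
    have hble' : b ≤ k := hble
    rw [mem_leftPat_sh' hk (by omega) hble', mem_leftPat_sh' hk (by omega) (by omega),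
      mem_leftPat_sh' hk (by omega) hble']
    exact hj.2.2.2.1 a b ha hb (by have := hk.1; omega)
  · intro a b ha hale hb
    have hale' : a ≤ k := hale
    rw [mem_leftPat_sh' hk hale' (by omega), mem_leftPat_sh' hk hale' (by omega),
      mem_leftPat_sh' hk (by omega) (by omega)]
    exact hj.2.2.2.2 a b ha (by have := hk.1; omega) hb

theorem ne_of_len_ne {a b : MeshPattern} (h : a.len ≠ b.len) : a ≠ b :=
  fun hab => h (by rw [hab])

theorem no_split_of_indec {m : MeshPattern} (hind : Indecomposable m) :
    ∀ j, 1 ≤ j → j < m.len → ¬ SplitAt m j := by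
  intro j h1 h2 hsp
  exact hind ⟨leftPat m j hsp, rightPat m j hsp,
    ne_of_len_ne (by show j ≠ m.len; omega),
    ne_of_len_ne (by show m.len - j ≠ m.len; omega),
    isDSum_split hsp⟩

theorem indec_of_no_split {m : MeshPattern}
    (h : ∀ j, 1 ≤ j → j < m.len → ¬ SplitAt m j) : Indecomposable m := by
  rintro ⟨s, t, hs, ht, hd⟩
  obtain ⟨hsp, hseq, hteq⟩ := isDSum_eq hd
  have hle : s.len ≤ m.len := hsp.1
  rcases Nat.eq_zero_or_pos s.len with h0 | h0
  · apply ht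
    rw [hteq]
    have hsp0 : SplitAt m 0 := h0 ▸ hsp
    have : rightPat m s.len hsp = rightPat m 0 hsp0 := by
      congr 1
    rw [this]
    exact rightPat_zero hsp0
  · rcases eq_or_lt_of_le hle with hfull | hlt
    · apply hs
      rw [hseq]
      have hspf : SplitAt m m.len := hfull ▸ hsp
      have : leftPat m s.len hsp = leftPat m m.len hspf := by
        congr 1
      rw [this]
      exact leftPat_full hspf
    · exact h s.len h0 hlt hsp

theorem sumOfList_len : ∀ (L : List MeshPattern) (r : MeshPattern),
    SumOfList L r → r.len = (L.map MeshPattern.len).sum := by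
  intro L
  induction L with
  | nil => intro r h; simpa using h.1
  | cons a L ih =>
    intro r h
    cases L with
    | nil =>
      have : a = r := h
      subst this
      simp
    | cons b rest =>
      obtain ⟨r', h1, h2⟩ := h
      have := ih r' h1
      simp only [List.map_cons, List.sum_cons] at this ⊢
      rw [h2.2.2.1, this]
theorem cons_decomp {a m : MeshPattern} {L : List MeshPattern}
    (hv : ∀ x ∈ a :: L, Indecomposable x ∧ 1 ≤ x.len)
    (hs : SumOfList (a :: L) m) (hL : L ≠ []) :
    ∃ r, SumOfList L r ∧ IsDSum a r m ∧ 1 ≤ r.len := by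
  cases L with
  | nil => exact absurd rfl hL
  | cons b rest =>
    obtain ⟨r, h1, h2⟩ := hs
    have hlen := sumOfList_len _ _ h1
    have hb := (hv b (by simp)).2
    refine ⟨r, h1, h2, ?_⟩
    rw [hlen]
    simp only [List.map_cons, List.sum_cons]
    omega

theorem exists_decomp : ∀ n (m : MeshPattern), m.len ≤ n → 1 ≤ m.len →
    ∃ L, (∀ a ∈ L, Indecomposable a ∧ 1 ≤ a.len) ∧ SumOfList L m := by
  intro n
  induction n with
  | zero => intro m h1 h2; omega
  | succ n ih =>
    intro m hle hpos
    classical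
    by_cases hsplit : ∃ j, 1 ≤ j ∧ j < m.len ∧ SplitAt m j
    · obtain ⟨hj1, hj2, hjs⟩ := Nat.find_spec hsplit
      set j := Nat.find hsplit with hjdef
      have hjm : j ≤ m.len := hjs.1
      obtain ⟨L', hL', hsum⟩ := ih (rightPat m j hjs)
        (by show m.len - j ≤ n; omega) (by show 1 ≤ m.len - j; omega)
      refine ⟨leftPat m j hjs :: L', ?_, ?_⟩
      · intro a ha
        rcases List.mem_cons.mp ha with rfl | ha
        · refine ⟨?_, hj1⟩
          apply indec_of_no_split
          intro j' h1 h2 hsp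
          have h2' : j' < j := h2
          have hsp' := splitAt_of_left hjs hsp
          exact Nat.find_min hsplit h2' ⟨h1, by omega, hsp'⟩
        · exact hL' a ha
      · cases L' with
        | nil =>
          exfalso
          have := hsum.1
          rw [show (rightPat m j hjs).len = m.len - j from rfl] at this
          omega
        | cons b rest => exact ⟨rightPat m j hjs, hsum, isDSum_split hjs⟩
    · push_neg at hsplit
      refine ⟨[m], ?_, ?_⟩
      · intro a ha
        rcases List.mem_cons.mp ha with rfl | ha
        · exact ⟨indec_of_no_split fun j h1 h2 => hsplit j h1 h2, hpos⟩
        · simp at ha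
      · show m = m
        rfl

theorem head_len_not_lt {m aL aR rL rR : MeshPattern}
    (hiR : Indecomposable aR) (hdL : IsDSum aL rL m) (hdR : IsDSum aR rR m)
    (h1 : 1 ≤ aL.len) : ¬ aL.len < aR.len := by
  intro hlt
  obtain ⟨hR, heR, _⟩ := isDSum_eq hdR
  obtain ⟨hL, _, _⟩ := isDSum_eq hdL
  have hsp := splitAt_left_of_le hR hL (le_of_lt hlt)
  rw [← heR] at hsp
  exact no_split_of_indec hiR aL.len h1 hlt hsp

theorem decomp_unique : ∀ n (m : MeshPattern), m.len ≤ n → 1 ≤ m.len →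
    ∀ L₁ L₂, ((∀ a ∈ L₁, Indecomposable a ∧ 1 ≤ a.len) ∧ SumOfList L₁ m) →
      ((∀ a ∈ L₂, Indecomposable a ∧ 1 ≤ a.len) ∧ SumOfList L₂ m) → L₁ = L₂ := by
  intro n
  induction n with
  | zero => intro m h1 h2; omega
  | succ n ih =>
    rintro m hle hpos L₁ L₂ ⟨hv₁, hs₁⟩ ⟨hv₂, hs₂⟩
    cases L₁ with
    | nil => exact absurd hs₁.1 (by omega)
    | cons a₁ T₁ =>
      cases L₂ with
      | nil => exact absurd hs₂.1 (by omega)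
      | cons a₂ T₂ =>
        rcases eq_or_ne T₁ ([] : List MeshPattern) with rfl | hT₁
        · have ha₁ : a₁ = m := hs₁
          rcases eq_or_ne T₂ ([] : List MeshPattern) with rfl | hT₂
          · have ha₂ : a₂ = m := hs₂
            rw [ha₁, ha₂]
          · exfalso
            obtain ⟨r, _, hd, hr⟩ := cons_decomp hv₂ hs₂ hT₂
            have hlen := hd.2.2.1
            have ha2 := (hv₂ a₂ (by simp)).2
            have hind : Indecomposable m := ha₁ ▸ (hv₁ a₁ (by simp)).1
            exact hind ⟨a₂, r, ne_of_len_ne (by omega), ne_of_len_ne (by omega), hd⟩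
        · rcases eq_or_ne T₂ ([] : List MeshPattern) with rfl | hT₂
          · exfalso
            have ha₂ : a₂ = m := hs₂
            obtain ⟨r, _, hd, hr⟩ := cons_decomp hv₁ hs₁ hT₁
            have hlen := hd.2.2.1
            have ha1 := (hv₁ a₁ (by simp)).2
            have hind : Indecomposable m := ha₂ ▸ (hv₂ a₂ (by simp)).1
            exact hind ⟨a₁, r, ne_of_len_ne (by omega), ne_of_len_ne (by omega), hd⟩
          · obtain ⟨r₁, ht₁, hd₁, hr₁⟩ := cons_decomp hv₁ hs₁ hT₁
            obtain ⟨r₂, ht₂, hd₂, hr₂⟩ := cons_decomp hv₂ hs₂ hT₂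
            have hi₁ := (hv₁ a₁ (by simp)).1
            have hi₂ := (hv₂ a₂ (by simp)).1
            have hl₁ := (hv₁ a₁ (by simp)).2
            have hl₂ := (hv₂ a₂ (by simp)).2
            have hjeq : a₁.len = a₂.len := by
              rcases Nat.lt_trichotomy a₁.len a₂.len with h | h | h
              · exact absurd h (head_len_not_lt hi₂ hd₁ hd₂ hl₁)
              · exact h
              · exact absurd h (head_len_not_lt hi₁ hd₂ hd₁ hl₂)
            obtain ⟨h₁, he₁s, he₁t⟩ := isDSum_eq hd₁
            obtain ⟨h₂, he₂s, he₂t⟩ := isDSum_eq hd₂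
            have haeq : a₁ = a₂ := by
              rw [he₁s, he₂s]
              congr 1
            have hreq : r₁ = r₂ := by
              rw [he₁t, he₂t]
              congr 1
            have hmlen := hd₁.2.2.1
            have hTeq : T₁ = T₂ := by
              refine ih r₁ (by omega) hr₁ T₁ T₂ ⟨?_, ht₁⟩ ⟨?_, ?_⟩
              · intro x hx
                exact hv₁ x (by simp [hx])
              · intro x hx
                exact hv₂ x (by simp [hx])
              · rw [hreq]
                exact ht₂
            rw [haeq, hTeq]

/-- Every (nonempty) mesh pattern has a unique decomposition as a direct sum of
(nonempty) indecomposable mesh patterns. -/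
theorem unique_decomposition (m : MeshPattern) (hm : 1 ≤ m.len) :
    ∃! L : List MeshPattern,
      (∀ a ∈ L, Indecomposable a ∧ 1 ≤ a.len) ∧ SumOfList L m := by
  obtain ⟨L, hL⟩ := exists_decomp m.len m le_rfl hm
  exact ⟨L, hL, fun L' hL' => decomp_unique m.len m le_rfl hm L' L hL' hL⟩

end MeshPattern
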